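/- Assume: (a) f satisfies f(y) ≥ f(x) + ⟨∇f(x), y − x⟩ + (μ_f/2)‖y − x‖_L² for all x, y ∈ E with 0 ≤ μ_f ≤ 1; (b) Ψ satisfies Ψ(λx + (1−λ)y) ≤ λΨ(x) + (1−λ)Ψ(y) − (μ_Ψ λ(1−λ)/2)‖x − y‖_L² for all x, y and λ ∈ [0,1], with μ_Ψ ≥ 0; (c) μ_f + μ_Ψ > 0, and set μ = (μ_f + μ_Ψ)/(1 + μ_Ψ); (d) F = f + Ψ attains its minimum value F*. Let (Ω, ℙ) be a probability space and (I_k)_{k≥0} an i.i.d. sequence of random variables, each uniformly distributed on {1,…,n}. Let α, β ≥ 0 with α < μ/n. For each k, let δ_k : E → ℝ^n be measurable with δ_k(x)_i ≥ 0 and (1/n)Σ_{i=1}^n δ_k(x)_i ≤ α(F(x) − F*) + β for all x ∈ E, and let T_k : E → E be measurable such that for every x, T_k(x) is a δ_k(x)-inexact update at x. Fix x₀ ∈ E and define the random iterates x_{k+1} = x_k + U_{I_k}((T_k(x_k))_{I_k}). Let ρ ∈ (0,1) and let ε satisfy βn/(ρ(μ − αn)) < ε < F(x₀) − F*. Then for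 every natural number K with K ≥ (n/(μ − αn)) · log((F(x₀) − F* − βn/(μ − αn))/(ερ − βn/(μ − αn))), one has ℙ(F(x_K) − F* ≤ ε) ≥ 1 − ρ. -/

import Mathlib

open scoped RealInnerProductSpace
open MeasureTheory

set_option linter.unusedSectionVars false
set_option maxHeartbeats 1000000

noncomputable section

variable {n : ℕ} {E : Fin n → Type*} [∀ i, NormedAddCommGroup (E i)]
  [∀ i, InnerProductSpace ℝ (E i)] [∀ i, FiniteDimensional ℝ (E i)]

/-- `U i t`: embedding of the `i`-th block into the product space `E = E₁ × ⋯ × Eₙ`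
(the vector with `i`-th block equal to `t` and all other blocks zero). -/
def blockEmbed (i : Fin n) (t : E i) : PiLp 2 E :=
  (WithLp.equiv 2 (∀ j, E j)).symm (Pi.single i t)

/-- `V_i(x,t) = ⟨∇_i f(x), t⟩ + (L_i/2)‖t‖² + Ψ_i(x_i + t)`. -/
def Vi (f : PiLp 2 E → ℝ) (L : Fin n → ℝ) (Ψ : ∀ i, E i → ℝ)
    (x : PiLp 2 E) (i : Fin n) (t : E i) : ℝ :=
  ⟪(gradient f x) i, t⟫ + L i / 2 * ‖t‖ ^ 2 + Ψ i (x i + t)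

/-- `T` is a `δ`-inexact update at `x`:
`V_i(x, T_i) ≤ min{V_i(x,0), δ_i + inf_t V_i(x,t)}` for every block `i`. -/
def IsInexactUpdate (f : PiLp 2 E → ℝ) (L : Fin n → ℝ) (Ψ : ∀ i, E i → ℝ)
    (δ : Fin n → ℝ) (x T : PiLp 2 E) : Prop :=
  ∀ i, Vi f L Ψ x i (T i) ≤ min (Vi f L Ψ x i 0) (δ i + ⨅ t : E i, Vi f L Ψ x i t)

/-- `H(x,T) = f(x) + ⟨∇f(x), T⟩ + (1/2)‖T‖_L² + Ψ(x+T)`. -/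
def Hfun (f : PiLp 2 E → ℝ) (L : Fin n → ℝ) (Ψ : ∀ i, E i → ℝ) (x T : PiLp 2 E) : ℝ :=
  f x + ⟪gradient f x, T⟫ + (1/2) * ∑ i, L i * ‖T i‖ ^ 2 + ∑ i, Ψ i (x i + T i)

/-- `F = f + Ψ` where `Ψ(x) = Σ_i Ψ_i(x_i)`. -/
def Ffun (f : PiLp 2 E → ℝ) (Ψ : ∀ i, E i → ℝ) (x : PiLp 2 E) : ℝ :=
  f x + ∑ i, Ψ i (x i)

lemma blockEmbed_apply (i : Fin n) (t : E i) (j : Fin n) :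
    blockEmbed i t j = Pi.single i t j := rfl

lemma add_blockEmbed_apply_same (x : PiLp 2 E) (i : Fin n) (t : E i) :
    (x + blockEmbed i t) i = x i + t := by
  simp [blockEmbed_apply, Pi.single_eq_same]

lemma add_blockEmbed_apply_ne (x : PiLp 2 E) (i : Fin n) (t : E i) {j : Fin n} (h : j ≠ i) :
    (x + blockEmbed i t) j = x j := by
  have : (x + blockEmbed i t) j = x j + blockEmbed i t j := rfl
  rw [this, blockEmbed_apply, Pi.single_eq_of_ne h, add_zero]

lemma blockEmbed_smul (i : Fin n) (t : E i) (s : ℝ) :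
    blockEmbed i (s • t) = s • blockEmbed i t := by
  apply (WithLp.equiv 2 (∀ j, E j)).injective
  simp only [blockEmbed]
  ext j
  simp [Pi.single_smul]

lemma inner_blockEmbed (y : PiLp 2 E) (i : Fin n) (t : E i) :
    ⟪y, blockEmbed i t⟫ = ⟪y i, t⟫ := by
  rw [PiLp.inner_apply]
  rw [Finset.sum_eq_single i]
  · rw [blockEmbed_apply, Pi.single_eq_same]
  · intro j _ hj
    rw [blockEmbed_apply, Pi.single_eq_of_ne hj, inner_zero_right]
  · simp

lemma Ffun_add_blockEmbed (f : PiLp 2 E → ℝ) (Ψ : ∀ i, E i → ℝ) (x : PiLp 2 E)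
    (i : Fin n) (t : E i) :
    Ffun f Ψ (x + blockEmbed i t) =
      f (x + blockEmbed i t) + Ψ i (x i + t) + (∑ j, Ψ j (x j)) - Ψ i (x i) := by
  unfold Ffun
  have h1 : ∑ j, Ψ j ((x + blockEmbed i t) j)
      = ∑ j, (Ψ j (x j) + (if j = i then Ψ i (x i + t) - Ψ i (x i) else 0)) := by
    apply Finset.sum_congr rfl
    intro j _
    by_cases h : j = i
    · subst h; rw [add_blockEmbed_apply_same]; simp
    · simp [h, add_blockEmbed_apply_ne x i t h]
  rw [h1, Finset.sum_add_distrib, Finset.sum_ite_eq' Finset.univ i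
    (fun _ => Ψ i (x i + t) - Ψ i (x i))]
  simp
  ring

lemma line_hasDerivAt (f : PiLp 2 E → ℝ) (hfdiff : Differentiable ℝ f)
    (x : PiLp 2 E) (i : Fin n) (t : E i) (s : ℝ) :
    HasDerivAt (fun s : ℝ => f (x + s • blockEmbed i t))
      ⟪(gradient f (x + s • blockEmbed i t)) i, t⟫ s := by
  have h1 : HasDerivAt (fun s : ℝ => x + s • blockEmbed i t) (blockEmbed i t) s := by
    simpa using ((hasDerivAt_id s).smul_const (blockEmbed i t)).const_add x
  have h2 := (hfdiff (x + s • blockEmbed i t)).hasGradientAt.hasFDerivAt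
  have h3 := HasFDerivAt.comp_hasDerivAt s h2 h1
  have h4 : (InnerProductSpace.toDual ℝ (PiLp 2 E)
      (gradient f (x + s • blockEmbed i t))) (blockEmbed i t)
      = ⟪(gradient f (x + s • blockEmbed i t)) i, t⟫ := by
    rw [InnerProductSpace.toDual_apply_apply, inner_blockEmbed]
  rwa [h4] at h3

lemma descent_lemma (L : Fin n → ℝ) (hL : ∀ i, 0 < L i)
    (f : PiLp 2 E → ℝ) (hfdiff : Differentiable ℝ f)
    (hLip : ∀ (x : PiLp 2 E) (i : Fin n) (t : E i),
      ‖(gradient f (x + blockEmbed i t)) i - (gradient f x) i‖ ≤ L i * ‖t‖)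
    (x : PiLp 2 E) (i : Fin n) (t : E i) :
    f (x + blockEmbed i t) ≤ f x + ⟪(gradient f x) i, t⟫ + L i / 2 * ‖t‖ ^ 2 := by
  set v := blockEmbed i t with hv
  set φ : ℝ → ℝ := fun s =>
    f (x + s • v) - s * ⟪(gradient f x) i, t⟫ - L i / 2 * ‖t‖ ^ 2 * s ^ 2 with hφ
  have hder : ∀ s : ℝ, HasDerivAt φ
      (⟪(gradient f (x + s • v)) i, t⟫ - ⟪(gradient f x) i, t⟫ - L i * ‖t‖ ^ 2 * s) s := by
    intro s
    have h1 := line_hasDerivAt f hfdiff x i t s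
    have h2 : HasDerivAt (fun s : ℝ => s * ⟪(gradient f x) i, t⟫)
        ⟪(gradient f x) i, t⟫ s := by
      simpa using (hasDerivAt_id s).mul_const ⟪(gradient f x) i, t⟫
    have h3 : HasDerivAt (fun s : ℝ => L i / 2 * ‖t‖ ^ 2 * s ^ 2)
        (L i * ‖t‖ ^ 2 * s) s := by
      have := (hasDerivAt_pow 2 s).const_mul (L i / 2 * ‖t‖ ^ 2)
      refine this.congr_deriv ?_
      ring
    exact (h1.sub h2).sub h3
  have hmono : AntitoneOn φ (Set.Icc 0 1) := by
    apply antitoneOn_of_deriv_nonpos (convex_Icc 0 1)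
    · exact fun s _ => (hder s).continuousAt.continuousWithinAt
    · intro s hs
      exact ((hder s).differentiableAt).differentiableWithinAt
    · intro s hs
      rw [interior_Icc] at hs
      rw [(hder s).deriv]
      have key : ⟪(gradient f (x + s • v)) i - (gradient f x) i, t⟫
          ≤ L i * ‖t‖ ^ 2 * s := by
        calc ⟪(gradient f (x + s • v)) i - (gradient f x) i, t⟫
            ≤ ‖(gradient f (x + s • v)) i - (gradient f x) i‖ * ‖t‖ :=
              real_inner_le_norm _ _
          _ ≤ (L i * ‖s • t‖) * ‖t‖ := by
              apply mul_le_mul_of_nonneg_right _ (norm_nonneg t)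
              have := hLip x i (s • t)
              rwa [blockEmbed_smul] at this
          _ = L i * ‖t‖ ^ 2 * s := by
              rw [norm_smul, Real.norm_eq_abs, abs_of_pos hs.1]
              ring
      rw [inner_sub_left] at key
      linarith
  have h01 := hmono (Set.left_mem_Icc.mpr zero_le_one) (Set.right_mem_Icc.mpr zero_le_one)
    zero_le_one
  have h0 : φ 0 = f x := by simp [hφ]
  have h1 : φ 1 = f (x + v) - ⟪(gradient f x) i, t⟫ - L i / 2 * ‖t‖ ^ 2 := by simp [hφ]
  rw [h0, h1] at h01
  linarith

lemma Vi_zero (f : PiLp 2 E → ℝ) (L : Fin n → ℝ) (Ψ : ∀ i, E i → ℝ)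
    (x : PiLp 2 E) (i : Fin n) : Vi f L Ψ x i 0 = Ψ i (x i) := by
  simp [Vi]

lemma Ffun_le_of_Vi (L : Fin n → ℝ) (hL : ∀ i, 0 < L i)
    (f : PiLp 2 E → ℝ) (hfdiff : Differentiable ℝ f)
    (hLip : ∀ (x : PiLp 2 E) (i : Fin n) (t : E i),
      ‖(gradient f (x + blockEmbed i t)) i - (gradient f x) i‖ ≤ L i * ‖t‖)
    (Ψ : ∀ i, E i → ℝ) (x : PiLp 2 E) (i : Fin n) (t : E i) :
    Ffun f Ψ (x + blockEmbed i t) ≤ Ffun f Ψ x + Vi f L Ψ x i t - Ψ i (x i) := by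
  rw [Ffun_add_blockEmbed]
  have := descent_lemma L hL f hfdiff hLip x i t
  unfold Ffun Vi
  linarith

lemma Vi_bddBelow (L : Fin n → ℝ) (hL : ∀ i, 0 < L i)
    (f : PiLp 2 E → ℝ) (hfdiff : Differentiable ℝ f)
    (hLip : ∀ (x : PiLp 2 E) (i : Fin n) (t : E i),
      ‖(gradient f (x + blockEmbed i t)) i - (gradient f x) i‖ ≤ L i * ‖t‖)
    (Ψ : ∀ i, E i → ℝ) (Fstar : ℝ) (hmin : ∀ y, Fstar ≤ Ffun f Ψ y)
    (x : PiLp 2 E) (i : Fin n) :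
    BddBelow (Set.range (Vi f L Ψ x i)) := by
  refine ⟨Fstar - Ffun f Ψ x + Ψ i (x i), ?_⟩
  rintro _ ⟨t, rfl⟩
  have h1 := Ffun_le_of_Vi L hL f hfdiff hLip Ψ x i t
  have h2 := hmin (x + blockEmbed i t)
  linarith

lemma sum_Vi_shift_le
    (L : Fin n → ℝ) (f : PiLp 2 E → ℝ) (Ψ : ∀ i, E i → ℝ)
    (μf μΨ : ℝ) (hμΨ0 : 0 ≤ μΨ)
    (hscf : ∀ x y : PiLp 2 E,
      f x + ⟪gradient f x, y - x⟫ + μf / 2 * ∑ i, L i * ‖y i - x i‖ ^ 2 ≤ f y)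
    (hscΨ : ∀ x y : PiLp 2 E, ∀ lam ∈ Set.Icc (0:ℝ) 1,
      ∑ i, Ψ i ((lam • x + (1 - lam) • y) i) ≤
        lam * ∑ i, Ψ i (x i) + (1 - lam) * ∑ i, Ψ i (y i)
          - μΨ * lam * (1 - lam) / 2 * ∑ i, L i * ‖x i - y i‖ ^ 2)
    (μ : ℝ) (hμdef : μ = (μf + μΨ) / (1 + μΨ)) (hμ0 : 0 ≤ μ) (hμ1 : μ ≤ 1)
    (Fstar : ℝ) (xstar : PiLp 2 E) (hstar : Ffun f Ψ xstar = Fstar)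
    (x : PiLp 2 E) :
    ∑ i, Vi f L Ψ x i ((μ • (xstar - x)) i) ≤
      (∑ i, Ψ i (x i)) - μ * (Ffun f Ψ x - Fstar) := by
  set d : PiLp 2 E := μ • (xstar - x) with hd
  set Q : ℝ := ∑ i, L i * ‖xstar i - x i‖ ^ 2 with hQ
  -- expand the sum of Vi
  have hexp : ∑ i, Vi f L Ψ x i (d i)
      = ⟪gradient f x, d⟫ + (∑ i, L i / 2 * ‖d i‖ ^ 2) + ∑ i, Ψ i (x i + d i) := by
    unfold Vi
    rw [PiLp.inner_apply, ← Finset.sum_add_distrib, ← Finset.sum_add_distrib]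
  -- inner term
  have hinner : ⟪gradient f x, d⟫ = μ * ⟪gradient f x, xstar - x⟫ := by
    rw [hd, real_inner_smul_right]
  have hf1 : ⟪gradient f x, xstar - x⟫ ≤ f xstar - f x - μf / 2 * Q := by
    have := hscf x xstar
    linarith
  -- quadratic term
  have hquad : ∑ i, L i / 2 * ‖d i‖ ^ 2 = μ ^ 2 / 2 * Q := by
    rw [hQ, Finset.mul_sum]
    apply Finset.sum_congr rfl
    intro i _
    have : d i = μ • (xstar i - x i) := rfl
    rw [this, norm_smul, Real.norm_eq_abs, mul_pow, sq_abs]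
    ring
  -- Psi term
  have hxd : ∀ i, x i + d i = (μ • xstar + (1 - μ) • x) i := by
    intro i
    have h1 : d i = μ • (xstar i - x i) := rfl
    have h2 : (μ • xstar + (1 - μ) • x) i = μ • xstar i + (1 - μ) • x i := rfl
    rw [h1, h2, smul_sub, sub_smul, one_smul]
    abel
  have hΨ1 : ∑ i, Ψ i (x i + d i) ≤
      μ * ∑ i, Ψ i (xstar i) + (1 - μ) * ∑ i, Ψ i (x i) - μΨ * μ * (1 - μ) / 2 * Q := by
    have := hscΨ xstar x μ ⟨hμ0, hμ1⟩
    calc ∑ i, Ψ i (x i + d i) = ∑ i, Ψ i ((μ • xstar + (1 - μ) • x) i) := by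
          apply Finset.sum_congr rfl; intro i _; rw [hxd i]
      _ ≤ _ := this
  -- the coefficient of Q vanishes
  have hcoef : μ ^ 2 / 2 - μ * μf / 2 - μΨ * μ * (1 - μ) / 2 = 0 := by
    have h1 : μ * (1 + μΨ) = μf + μΨ := by
      rw [hμdef]; field_simp
    nlinarith [h1]
  have hFx : Ffun f Ψ x = f x + ∑ i, Ψ i (x i) := rfl
  have hFs : f xstar + ∑ i, Ψ i (xstar i) = Fstar := hstar
  have hcoefQ : (μ ^ 2 / 2 - μ * μf / 2 - μΨ * μ * (1 - μ) / 2) * Q = 0 := by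
    rw [hcoef]; ring
  have hmul := mul_le_mul_of_nonneg_left hf1 hμ0
  have hFsμ : μ * f xstar + μ * (∑ i, Ψ i (xstar i)) = μ * Fstar := by
    rw [← hFs]; ring
  have hFxμ : μ * Ffun f Ψ x = μ * f x + μ * (∑ i, Ψ i (x i)) := by
    rw [hFx]; ring
  rw [hexp, hinner, hquad]
  nlinarith [hmul, hΨ1, hcoefQ, hFsμ, hFxμ]


-- pointwise decrease
lemma Ffun_update_le (L : Fin n → ℝ) (hL : ∀ i, 0 < L i)
    (f : PiLp 2 E → ℝ) (hfdiff : Differentiable ℝ f)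
    (hLip : ∀ (x : PiLp 2 E) (i : Fin n) (t : E i),
      ‖(gradient f (x + blockEmbed i t)) i - (gradient f x) i‖ ≤ L i * ‖t‖)
    (Ψ : ∀ i, E i → ℝ) (δ : Fin n → ℝ) (x Tx : PiLp 2 E)
    (hT : IsInexactUpdate f L Ψ δ x Tx) (i : Fin n) :
    Ffun f Ψ (x + blockEmbed i (Tx i)) ≤ Ffun f Ψ x := by
  have h1 := Ffun_le_of_Vi L hL f hfdiff hLip Ψ x i (Tx i)
  have h2 := (hT i).trans (min_le_left _ _)
  rw [Vi_zero] at h2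
  linarith

-- key expected-decrease (summed over blocks) lemma
lemma sum_Ffun_update_le (L : Fin n → ℝ) (hL : ∀ i, 0 < L i)
    (f : PiLp 2 E → ℝ) (hfdiff : Differentiable ℝ f)
    (hLip : ∀ (x : PiLp 2 E) (i : Fin n) (t : E i),
      ‖(gradient f (x + blockEmbed i t)) i - (gradient f x) i‖ ≤ L i * ‖t‖)
    (Ψ : ∀ i, E i → ℝ)
    (μf μΨ : ℝ) (hμΨ0 : 0 ≤ μΨ)
    (hscf : ∀ x y : PiLp 2 E,
      f x + ⟪gradient f x, y - x⟫ + μf / 2 * ∑ i, L i * ‖y i - x i‖ ^ 2 ≤ f y)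
    (hscΨ : ∀ x y : PiLp 2 E, ∀ lam ∈ Set.Icc (0:ℝ) 1,
      ∑ i, Ψ i ((lam • x + (1 - lam) • y) i) ≤
        lam * ∑ i, Ψ i (x i) + (1 - lam) * ∑ i, Ψ i (y i)
          - μΨ * lam * (1 - lam) / 2 * ∑ i, L i * ‖x i - y i‖ ^ 2)
    (μ : ℝ) (hμdef : μ = (μf + μΨ) / (1 + μΨ)) (hμ0 : 0 ≤ μ) (hμ1 : μ ≤ 1)
    (Fstar : ℝ) (xstar : PiLp 2 E) (hstar : Ffun f Ψ xstar = Fstar)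
    (hmin : ∀ y, Fstar ≤ Ffun f Ψ y)
    (δ : Fin n → ℝ) (x Tx : PiLp 2 E)
    (hT : IsInexactUpdate f L Ψ δ x Tx) :
    ∑ i, (Ffun f Ψ (x + blockEmbed i (Tx i)) - Fstar) ≤
      (n - μ) * (Ffun f Ψ x - Fstar) + ∑ i, δ i := by
  set d : PiLp 2 E := μ • (xstar - x) with hd
  have hstep : ∀ i, Ffun f Ψ (x + blockEmbed i (Tx i)) - Fstar ≤
      (Ffun f Ψ x - Fstar) + (δ i + Vi f L Ψ x i (d i)) - Ψ i (x i) := by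
    intro i
    have h1 := Ffun_le_of_Vi L hL f hfdiff hLip Ψ x i (Tx i)
    have h2 := (hT i).trans (min_le_right _ _)
    have h3 : (⨅ t : E i, Vi f L Ψ x i t) ≤ Vi f L Ψ x i (d i) :=
      ciInf_le (Vi_bddBelow L hL f hfdiff hLip Ψ Fstar hmin x i) (d i)
    linarith
  calc ∑ i, (Ffun f Ψ (x + blockEmbed i (Tx i)) - Fstar)
      ≤ ∑ i, ((Ffun f Ψ x - Fstar) + (δ i + Vi f L Ψ x i (d i)) - Ψ i (x i)) :=
        Finset.sum_le_sum (fun i _ => hstep i)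
    _ = (n : ℝ) * (Ffun f Ψ x - Fstar) + ∑ i, δ i + ∑ i, Vi f L Ψ x i (d i)
        - ∑ i, Ψ i (x i) := by
        rw [Finset.sum_sub_distrib, Finset.sum_add_distrib, Finset.sum_add_distrib,
          Finset.sum_const, Finset.card_univ, Fintype.card_fin, nsmul_eq_mul]
        ring
    _ ≤ (n : ℝ) * (Ffun f Ψ x - Fstar) + ∑ i, δ i +
        ((∑ i, Ψ i (x i)) - μ * (Ffun f Ψ x - Fstar)) - ∑ i, Ψ i (x i) := by
        have := sum_Vi_shift_le L f Ψ μf μΨ hμΨ0 hscf hscΨ μ hμdef hμ0 hμ1 Fstar xstar hstar x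
        linarith
    _ = (n - μ) * (Ffun f Ψ x - Fstar) + ∑ i, δ i := by ring

open ProbabilityTheory

/-- Iteration complexity of Inexact Coordinate Descent for a strongly convex composite
objective with uniform block-selection probabilities: with high probability `1 − ρ`,
after `K ≥ (n/(μ − αn))·log((F(x₀) − F* − βn/(μ − αn))/(ερ − βn/(μ − αn)))` iterations the
residual is at most `ε`. -/
theorem icd_strongly_convex_complexity
    [∀ i, MeasurableSpace (E i)] [∀ i, BorelSpace (E i)]
    [MeasurableSpace (PiLp 2 E)] [BorelSpace (PiLp 2 E)]
    (hn : 0 < n)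
    (L : Fin n → ℝ) (hL : ∀ i, 0 < L i)
    (f : PiLp 2 E → ℝ) (hfdiff : Differentiable ℝ f) (hfconv : ConvexOn ℝ Set.univ f)
    (hLip : ∀ (x : PiLp 2 E) (i : Fin n) (t : E i),
      ‖(gradient f (x + blockEmbed i t)) i - (gradient f x) i‖ ≤ L i * ‖t‖)
    (Ψ : ∀ i, E i → ℝ) (hΨconv : ∀ i, ConvexOn ℝ Set.univ (Ψ i))
    (hΨcont : ∀ i, Continuous (Ψ i))
    -- strong convexity data
    (μf μΨ : ℝ) (hμf0 : 0 ≤ μf) (hμf1 : μf ≤ 1) (hμΨ0 : 0 ≤ μΨ) (hμpos : 0 < μf + μΨ)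
    (hscf : ∀ x y : PiLp 2 E,
      f x + ⟪gradient f x, y - x⟫ + μf / 2 * ∑ i, L i * ‖y i - x i‖ ^ 2 ≤ f y)
    (hscΨ : ∀ x y : PiLp 2 E, ∀ lam ∈ Set.Icc (0:ℝ) 1,
      ∑ i, Ψ i ((lam • x + (1 - lam) • y) i) ≤
        lam * ∑ i, Ψ i (x i) + (1 - lam) * ∑ i, Ψ i (y i)
          - μΨ * lam * (1 - lam) / 2 * ∑ i, L i * ‖x i - y i‖ ^ 2)
    (μ : ℝ) (hμdef : μ = (μf + μΨ) / (1 + μΨ))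
    -- the minimum of F
    (Fstar : ℝ) (xstar : PiLp 2 E) (hstar : Ffun f Ψ xstar = Fstar)
    (hmin : ∀ y, Fstar ≤ Ffun f Ψ y)
    -- probability space and i.i.d. uniform block selection
    {Ω : Type*} [MeasurableSpace Ω] (Pr : Measure Ω) [IsProbabilityMeasure Pr]
    (I : ℕ → Ω → Fin n) (hImeas : ∀ k, Measurable (I k))
    (hIindep : iIndepFun I Pr)
    (hIunif : ∀ k i, Pr {ω | I k ω = i} = ((n : ENNReal))⁻¹)
    -- inexactness control
    (α β : ℝ) (hα0 : 0 ≤ α) (hβ0 : 0 ≤ β) (hαμ : α < μ / n)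
    (δ : ℕ → PiLp 2 E → Fin n → ℝ) (hδmeas : ∀ k, Measurable (δ k))
    (hδ0 : ∀ k x i, 0 ≤ δ k x i)
    (hδbar : ∀ k x, (1 / (n : ℝ)) * ∑ i, δ k x i ≤ α * (Ffun f Ψ x - Fstar) + β)
    -- the inexact update maps
    (T : ℕ → PiLp 2 E → PiLp 2 E) (hTmeas : ∀ k, Measurable (T k))
    (hT : ∀ k x, IsInexactUpdate f L Ψ (δ k x) x (T k x))
    -- the random iterates
    (x0 : PiLp 2 E) (X : ℕ → Ω → PiLp 2 E) (hX0 : ∀ ω, X 0 ω = x0)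
    (hXsucc : ∀ k ω,
      X (k + 1) ω = X k ω + blockEmbed (I k ω) ((T k (X k ω)) (I k ω)))
    -- accuracy and confidence
    (ρ : ℝ) (hρ : ρ ∈ Set.Ioo (0 : ℝ) 1) (ε : ℝ)
    (hεlow : β * n / (ρ * (μ - α * n)) < ε) (hεup : ε < Ffun f Ψ x0 - Fstar)
    (K : ℕ)
    (hK : (n : ℝ) / (μ - α * n) *
        Real.log ((Ffun f Ψ x0 - Fstar - β * n / (μ - α * n)) /
          (ε * ρ - β * n / (μ - α * n))) ≤ K) :
    ENNReal.ofReal (1 - ρ) ≤ Pr {ω | Ffun f Ψ (X K ω) - Fstar ≤ ε} := by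
    classical
  have hn' : (0:ℝ) < n := by exact_mod_cast hn
  have hnne : (n:ℝ) ≠ 0 := ne_of_gt hn'
  have hμΨ1 : (0:ℝ) < 1 + μΨ := by linarith
  have hμpos' : 0 < μ := by rw [hμdef]; positivity
  have hμ0 : 0 ≤ μ := le_of_lt hμpos'
  have hμ1 : μ ≤ 1 := by rw [hμdef, div_le_one hμΨ1]; linarith
  have hρ0 : 0 < ρ := hρ.1
  have hρ1 : ρ < 1 := hρ.2
  have hcpos : 0 < μ - α * n := by
    have h := hαμ
    rw [lt_div_iff₀ hn'] at h
    linarith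
  set c : ℝ := (μ - α * n) / n with hc
  have hc0 : 0 < c := div_pos hcpos hn'
  have hn1 : (1:ℝ) ≤ n := by exact_mod_cast hn
  have hc1 : c ≤ 1 := by
    rw [hc, div_le_one hn']
    nlinarith [mul_nonneg hα0 (le_of_lt hn')]
  set r : ℝ := 1 - c with hr
  have hr0 : 0 ≤ r := by rw [hr]; linarith
  set b : ℝ := β * n / (μ - α * n) with hb
  have hb0 : 0 ≤ b := by
    apply div_nonneg _ (le_of_lt hcpos)
    positivity
  have hcb : c * b = β := by
    rw [hc, hb]
    field_simp
  have hrb : r * b + β = b := by rw [hr]; nlinarith [hcb]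
  -- continuity and measurability basics
  have heval : ∀ i : Fin n, Continuous (fun x : PiLp 2 E => x i) := fun i =>
    (continuous_apply i).comp (PiLp.continuous_ofLp 2 E)
  have hFFc : Continuous (Ffun f Ψ) := by
    apply hfdiff.continuous.add
    exact continuous_finset_sum _ fun i _ => (hΨcont i).comp (heval i)
  set Φ : ℕ → Fin n → PiLp 2 E → PiLp 2 E :=
    fun k i x => x + blockEmbed i ((T k x) i) with hΦ
  have hbe : ∀ i : Fin n, Continuous (fun t : E i => blockEmbed i t) := fun i =>
    (PiLp.continuous_toLp 2 E).comp (continuous_single i)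
  have hΦmeas : ∀ k i, Measurable (Φ k i) := by
    intro k i
    apply Measurable.add measurable_id
    exact (hbe i).measurable.comp ((heval i).measurable.comp (hTmeas k))
  have hΦmeas2 : ∀ k, Measurable (fun p : PiLp 2 E × Fin n => Φ k p.2 p.1) := fun k =>
    measurable_from_prod_countable_left (fun i => hΦmeas k i)
  have hXmeas : ∀ k, Measurable (X k) := by
    intro k; induction k with
    | zero =>
      have h : X 0 = fun _ => x0 := funext hX0
      rw [h]; exact measurable_const
    | succ k ih =>
      have h : X (k+1) = (fun p : PiLp 2 E × Fin n => Φ k p.2 p.1) ∘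
          (fun ω => (X k ω, I k ω)) := funext fun ω => hXsucc k ω
      rw [h]; exact (hΦmeas2 k).comp (ih.prodMk (hImeas k))
  -- independence of I k and X k
  have hindep : ∀ k, IndepFun (I k) (X k) Pr := by
    intro k
    obtain ⟨Ξ, hΞm, hΞ⟩ : ∃ Ξ : (↥(Finset.range k) → Fin n) → PiLp 2 E,
        Measurable Ξ ∧ ∀ ω, X k ω = Ξ (fun j => I j ω) := by
      induction k with
      | zero => exact ⟨fun _ => x0, measurable_const, fun ω => hX0 ω⟩
      | succ k ih =>
        obtain ⟨Ξ, hΞm, hΞ⟩ := ih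
        refine ⟨fun v => Φ k (v ⟨k, by simp⟩)
          (Ξ (fun j => v ⟨j.1, Finset.mem_range.mpr
            (Nat.lt_succ_of_lt (Finset.mem_range.mp j.2))⟩)), ?_, ?_⟩
        · have hrestr : Measurable (fun (v : ↥(Finset.range (k+1)) → Fin n)
              (j : ↥(Finset.range k)) => v ⟨j.1, Finset.mem_range.mpr
                (Nat.lt_succ_of_lt (Finset.mem_range.mp j.2))⟩) :=
            measurable_pi_lambda _ (fun j => measurable_pi_apply _)
          have hlast : Measurable (fun v : ↥(Finset.range (k+1)) → Fin n =>
              v ⟨k, by simp⟩) := measurable_pi_apply _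
          exact (hΦmeas2 k).comp ((hΞm.comp hrestr).prodMk hlast)
        · intro ω
          rw [hXsucc k ω, hΞ ω]
    have hdisj : Disjoint ({k} : Finset ℕ) (Finset.range k) := by simp
    have h1 := hIindep.indepFun_finset {k} (Finset.range k) hdisj hImeas
    have h2 := h1.comp
      (measurable_pi_apply (⟨k, Finset.mem_singleton_self k⟩ : (({k} : Finset ℕ) : Type)))
      hΞm
    have e2 : Ξ ∘ (fun ω (j : ↥(Finset.range k)) => I j ω) = X k :=
      funext fun ω => (hΞ ω).symm
    rw [e2] at h2
    exact h2
  -- the residual process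
  set G : ℕ → Ω → ℝ := fun k ω => Ffun f Ψ (X k ω) - Fstar with hGdef
  set C0 : ℝ := Ffun f Ψ x0 - Fstar with hC0
  have hC0nn : 0 ≤ C0 := sub_nonneg.mpr (hmin x0)
  have hGmeas : ∀ k, Measurable (G k) := fun k =>
    (hFFc.measurable.comp (hXmeas k)).sub measurable_const
  have hGnonneg : ∀ k ω, 0 ≤ G k ω := fun k ω => sub_nonneg.mpr (hmin _)
  have hGmono : ∀ k ω, G (k+1) ω ≤ G k ω := by
    intro k ω
    have h := Ffun_update_le L hL f hfdiff hLip Ψ (δ k (X k ω)) (X k ω) (T k (X k ω))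
      (hT k (X k ω)) (I k ω)
    have hx : G (k+1) ω = Ffun f Ψ (X k ω + blockEmbed (I k ω) ((T k (X k ω)) (I k ω)))
        - Fstar := by simp only [hGdef]; rw [hXsucc k ω]
    rw [hx]
    simp only [hGdef]
    linarith
  have hGb : ∀ k ω, G k ω ≤ C0 := by
    intro k; induction k with
    | zero =>
      intro ω
      simp only [hGdef, hC0]
      rw [hX0 ω]
    | succ k ih => intro ω; exact (hGmono k ω).trans (ih ω)
  have hGint : ∀ k, Integrable (G k) Pr := by
    intro k
    refine Integrable.mono' (integrable_const C0) (hGmeas k).aestronglyMeasurable ?_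
    exact Filter.Eventually.of_forall fun ω => by
      rw [Real.norm_eq_abs, abs_of_nonneg (hGnonneg k ω)]; exact hGb k ω
  -- one-step recursion in expectation
  have hrec : ∀ k, ∫ ω, G (k+1) ω ∂Pr ≤ r * (∫ ω, G k ω ∂Pr) + β := by
    intro k
    set B : Fin n → Ω → ℝ := fun i ω => Ffun f Ψ (Φ k i (X k ω)) - Fstar with hB
    have hBmeas : ∀ i, Measurable (B i) := fun i =>
      (hFFc.measurable.comp ((hΦmeas k i).comp (hXmeas k))).sub measurable_const
    have hBnonneg : ∀ i ω, 0 ≤ B i ω := fun i ω => sub_nonneg.mpr (hmin _)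
    have hBle : ∀ i ω, B i ω ≤ G k ω := fun i ω => by
      have h := Ffun_update_le L hL f hfdiff hLip Ψ (δ k (X k ω)) (X k ω) (T k (X k ω))
        (hT k (X k ω)) i
      rw [hB, hGdef]
      simp only [hΦ]
      linarith
    have hBint : ∀ i, Integrable (B i) Pr := by
      intro i
      refine Integrable.mono' (integrable_const C0) (hBmeas i).aestronglyMeasurable ?_
      exact Filter.Eventually.of_forall fun ω => by
        rw [Real.norm_eq_abs, abs_of_nonneg (hBnonneg i ω)]
        exact (hBle i ω).trans (hGb k ω)
    set A : Fin n → Ω → ℝ := fun i ω => if I k ω = i then (1:ℝ) else 0 with hA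
    have hAmeas : ∀ i, Measurable (A i) := fun i =>
      (measurable_of_countable (fun j : Fin n => if j = i then (1:ℝ) else 0)).comp (hImeas k)
    have hAint : ∀ i, Integrable (A i) Pr := by
      intro i
      refine Integrable.mono' (integrable_const (1:ℝ)) (hAmeas i).aestronglyMeasurable ?_
      exact Filter.Eventually.of_forall fun ω => by
        rw [hA, Real.norm_eq_abs]
        by_cases h : I k ω = i <;> simp [h]
    have hABindep : ∀ i, IndepFun (A i) (B i) Pr := by
      intro i
      have h : IndepFun ((fun j : Fin n => if j = i then (1:ℝ) else 0) ∘ (I k))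
          ((fun x => Ffun f Ψ (Φ k i x) - Fstar) ∘ (X k)) Pr :=
        (hindep k).comp (measurable_of_countable _)
          ((hFFc.measurable.comp (hΦmeas k i)).sub measurable_const)
      exact h
    have hABint : ∀ i, Integrable (fun ω => A i ω * B i ω) Pr := by
      intro i
      refine Integrable.mono' (integrable_const C0)
        ((hAmeas i).mul (hBmeas i)).aestronglyMeasurable ?_
      refine Filter.Eventually.of_forall fun ω => ?_
      rw [Real.norm_eq_abs, abs_mul]
      by_cases h : I k ω = i
      · have : A i ω = 1 := by rw [hA]; simp [h]
        rw [this]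
        rw [abs_one, one_mul, abs_of_nonneg (hBnonneg i ω)]
        exact (hBle i ω).trans (hGb k ω)
      · have : A i ω = 0 := by rw [hA]; simp [h]
        rw [this]
        simpa using hC0nn
    have hsum : ∀ ω, G (k+1) ω = ∑ i, A i ω * B i ω := by
      intro ω
      have h1 : G (k+1) ω = B (I k ω) ω := by
        simp only [hGdef, hB, hΦ]
        rw [hXsucc k ω]
      rw [h1]
      have h2 : ∑ i, A i ω * B i ω = ∑ i, (if I k ω = i then B i ω else 0) := by
        apply Finset.sum_congr rfl
        intro i _
        by_cases h : I k ω = i <;> simp [hA, h]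
      rw [h2, Finset.sum_ite_eq]
      simp
    have hAval : ∀ i, ∫ ω, A i ω ∂Pr = 1 / n := by
      intro i
      have hset : MeasurableSet {ω | I k ω = i} := (hImeas k) (measurableSet_singleton i)
      have hAi : A i = Set.indicator {ω | I k ω = i} (fun _ => (1:ℝ)) := by
        funext ω
        rw [hA, Set.indicator_apply]
        by_cases h : I k ω = i <;> simp [h]
      rw [hAi, integral_indicator_const (1:ℝ) hset, measureReal_def, hIunif k i]
      rw [smul_eq_mul, mul_one, ENNReal.toReal_inv]
      simp
    have hprod : ∀ i, ∫ ω, A i ω * B i ω ∂Pr = (1/(n:ℝ)) * ∫ ω, B i ω ∂Pr := by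
      intro i
      have h := (hABindep i).integral_mul_eq_mul_integral (hAint i).aestronglyMeasurable (hBint i).aestronglyMeasurable
      have h' : ∫ ω, A i ω * B i ω ∂Pr = (∫ ω, A i ω ∂Pr) * ∫ ω, B i ω ∂Pr := h
      rw [h', hAval i]
    have h1 : ∫ ω, G (k+1) ω ∂Pr = ∑ i, ∫ ω, A i ω * B i ω ∂Pr := by
      rw [show (fun ω => G (k+1) ω) = fun ω => ∑ i, A i ω * B i ω from funext hsum]
      exact integral_finset_sum _ (fun i _ => hABint i)
    have h2 : ∫ ω, G (k+1) ω ∂Pr = (1/(n:ℝ)) * ∑ i, ∫ ω, B i ω ∂Pr := by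
      rw [h1, Finset.mul_sum]
      exact Finset.sum_congr rfl fun i _ => hprod i
    have h3 : ∑ i, ∫ ω, B i ω ∂Pr = ∫ ω, ∑ i, B i ω ∂Pr :=
      (integral_finset_sum _ (fun i _ => hBint i)).symm
    have h4 : ∀ ω, ∑ i, B i ω ≤ ((n:ℝ) - μ + α * n) * G k ω + n * β := by
      intro ω
      have hkey := sum_Ffun_update_le L hL f hfdiff hLip Ψ μf μΨ hμΨ0 hscf hscΨ μ hμdef
        hμ0 hμ1 Fstar xstar hstar hmin (δ k (X k ω)) (X k ω) (T k (X k ω)) (hT k (X k ω))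
      have hδ2 : ∑ i, δ k (X k ω) i ≤ (n:ℝ) * (α * G k ω + β) := by
        have hδ1 := hδbar k (X k ω)
        have h := mul_le_mul_of_nonneg_left hδ1 (le_of_lt hn')
        have he : (n:ℝ) * ((1 / (n:ℝ)) * ∑ i, δ k (X k ω) i) = ∑ i, δ k (X k ω) i := by
          field_simp
        rw [he] at h
        rw [hGdef]
        calc ∑ i, δ k (X k ω) i
            ≤ (n:ℝ) * (α * (Ffun f Ψ (X k ω) - Fstar) + β) := h
          _ = (n:ℝ) * (α * (Ffun f Ψ (X k ω) - Fstar) + β) := rfl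
      have hBsum : ∑ i, B i ω
          = ∑ i, (Ffun f Ψ (X k ω + blockEmbed i ((T k (X k ω)) i)) - Fstar) := rfl
      rw [hBsum, hGdef]
      have hGk : G k ω = Ffun f Ψ (X k ω) - Fstar := rfl
      rw [hGk] at hδ2
      nlinarith [hkey, hδ2]
    have h5 : ∫ ω, ∑ i, B i ω ∂Pr ≤ ((n:ℝ) - μ + α * n) * (∫ ω, G k ω ∂Pr) + n * β := by
      have hint1 : Integrable (fun ω => ∑ i, B i ω) Pr :=
        integrable_finset_sum _ (fun i _ => hBint i)
      have hint2 : Integrable (fun ω => ((n:ℝ) - μ + α * n) * G k ω + n * β) Pr :=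
        ((hGint k).const_mul _).add (integrable_const _)
      have := integral_mono hint1 hint2 h4
      calc ∫ ω, ∑ i, B i ω ∂Pr
          ≤ ∫ ω, (((n:ℝ) - μ + α * n) * G k ω + n * β) ∂Pr := this
        _ = ((n:ℝ) - μ + α * n) * (∫ ω, G k ω ∂Pr) + n * β := by
            rw [integral_add ((hGint k).const_mul _) (integrable_const _),
              integral_const_mul, integral_const]
            simp
    rw [h2]
    have h6 : (1/(n:ℝ)) * (((n:ℝ) - μ + α * n) * (∫ ω, G k ω ∂Pr) + n * β)
        = r * (∫ ω, G k ω ∂Pr) + β := by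
      rw [hr, hc]
      field_simp
      ring
    calc (1/(n:ℝ)) * ∑ i, ∫ ω, B i ω ∂Pr
        = (1/(n:ℝ)) * ∫ ω, ∑ i, B i ω ∂Pr := by rw [h3]
      _ ≤ (1/(n:ℝ)) * (((n:ℝ) - μ + α * n) * (∫ ω, G k ω ∂Pr) + n * β) := by
          apply mul_le_mul_of_nonneg_left h5
          positivity
      _ = r * (∫ ω, G k ω ∂Pr) + β := h6
  -- closed form bound
  have hclosed : ∀ k, ∫ ω, G k ω ∂Pr ≤ r ^ k * (C0 - b) + b := by
    intro k; induction k with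
    | zero =>
      have h : (fun ω => G 0 ω) = fun _ => C0 := funext fun ω => by
        simp only [hGdef, hC0]; rw [hX0 ω]
      rw [h, integral_const]
      simp
    | succ k ih =>
      calc ∫ ω, G (k+1) ω ∂Pr ≤ r * (∫ ω, G k ω ∂Pr) + β := hrec k
        _ ≤ r * (r ^ k * (C0 - b) + b) + β := by nlinarith [mul_le_mul_of_nonneg_left ih hr0]
        _ = r ^ (k+1) * (C0 - b) + (r * b + β) := by ring
        _ = r ^ (k+1) * (C0 - b) + b := by rw [hrb]
  -- numeric facts
  have hε0 : 0 < ε := by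
    have h : 0 ≤ β * n / (ρ * (μ - α * n)) := by positivity
    linarith
  have hbρ : b < ε * ρ := by
    have h := hεlow
    rw [div_lt_iff₀ (by positivity : (0:ℝ) < ρ * (μ - α * n))] at h
    rw [hb, div_lt_iff₀ hcpos]
    nlinarith
  have hApos : 0 < C0 - b := by
    have : ε * ρ < ε := by nlinarith
    rw [hC0]; nlinarith [hεup]
  have hBpos : 0 < ε * ρ - b := by linarith
  -- exponential bound
  have hrK : r ^ K * (C0 - b) ≤ ε * ρ - b := by
    have h5 : r ≤ Real.exp (-c) := by
      have := Real.add_one_le_exp (-c)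
      rw [hr]; linarith
    have h6 : r ^ K ≤ Real.exp (-(c * K)) := by
      calc r ^ K ≤ (Real.exp (-c)) ^ K := pow_le_pow_left₀ hr0 h5 K
        _ = Real.exp (-(c * K)) := by
            rw [← Real.exp_nat_mul]
            ring_nf
    have hinvc : (n:ℝ) / (μ - α * n) = 1 / c := by
      rw [hc]; field_simp
    have h7 : Real.log ((C0 - b) / (ε * ρ - b)) ≤ c * K := by
      have hK' := hK
      rw [hinvc] at hK'
      have hlog : Real.log ((Ffun f Ψ x0 - Fstar - β * n / (μ - α * n)) /
          (ε * ρ - β * n / (μ - α * n))) = Real.log ((C0 - b) / (ε * ρ - b)) := by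
        rw [hC0, hb]
      rw [hlog] at hK'
      have := mul_le_mul_of_nonneg_left hK' (le_of_lt hc0)
      calc Real.log ((C0 - b) / (ε * ρ - b))
          = c * (1 / c * Real.log ((C0 - b) / (ε * ρ - b))) := by field_simp
        _ ≤ c * K := this
    have h8 : Real.exp (-(c * K)) ≤ (ε * ρ - b) / (C0 - b) := by
      have hquot : (C0 - b) / (ε * ρ - b) ≤ Real.exp (c * K) := by
        calc (C0 - b) / (ε * ρ - b)
            = Real.exp (Real.log ((C0 - b) / (ε * ρ - b))) :=
              (Real.exp_log (by positivity)).symm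
          _ ≤ Real.exp (c * K) := Real.exp_le_exp.mpr h7
      have h10 := one_div_le_one_div_of_le (div_pos hApos hBpos) hquot
      rw [one_div_div] at h10
      rw [Real.exp_neg, ← one_div]
      exact h10
    calc r ^ K * (C0 - b) ≤ ((ε * ρ - b) / (C0 - b)) * (C0 - b) :=
          mul_le_mul_of_nonneg_right (h6.trans h8) (le_of_lt hApos)
      _ = ε * ρ - b := by field_simp
  have hEK : ∫ ω, G K ω ∂Pr ≤ ε * ρ := (hclosed K).trans (by linarith)
  -- Markov inequality
  have hmark := mul_meas_ge_le_integral_of_nonneg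
    (Filter.Eventually.of_forall (hGnonneg K)) (hGint K) ε
  have htail : (Pr {ω | ε ≤ G K ω}).toReal ≤ ρ := by
    have h := hmark.trans hEK
    have := le_of_mul_le_mul_left h hε0
    exact this
  -- conclude
  have hSmeas : MeasurableSet {ω | Ffun f Ψ (X K ω) - Fstar ≤ ε} := by
    have : {ω | Ffun f Ψ (X K ω) - Fstar ≤ ε} = {ω | G K ω ≤ ε} := rfl
    rw [this]
    exact measurableSet_le (hGmeas K) measurable_const
  have hcompl : {ω | Ffun f Ψ (X K ω) - Fstar ≤ ε}ᶜ ⊆ {ω | ε ≤ G K ω} := by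
    intro ω hω
    have : ¬ (G K ω ≤ ε) := hω
    exact le_of_lt (lt_of_not_ge this)
  have htail2 : Pr {ω | Ffun f Ψ (X K ω) - Fstar ≤ ε}ᶜ ≤ ENNReal.ofReal ρ := by
    refine (measure_mono hcompl).trans ?_
    rw [← ENNReal.ofReal_toReal (measure_ne_top Pr _)]
    exact ENNReal.ofReal_le_ofReal htail
  have hfinal : Pr {ω | Ffun f Ψ (X K ω) - Fstar ≤ ε}
      = 1 - Pr {ω | Ffun f Ψ (X K ω) - Fstar ≤ ε}ᶜ := by
    rw [prob_compl_eq_one_sub hSmeas]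
    rw [ENNReal.sub_sub_cancel ENNReal.one_ne_top prob_le_one]
  rw [hfinal]
  calc ENNReal.ofReal (1 - ρ) = 1 - ENNReal.ofReal ρ := by
        rw [ENNReal.ofReal_sub _ (le_of_lt hρ0), ENNReal.ofReal_one]
    _ ≤ 1 - Pr {ω | Ffun f Ψ (X K ω) - Fstar ≤ ε}ᶜ := tsub_le_tsub_left htail2 1
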